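/- Let A₁, A₂ be abelian groups with A₂ essentially torsion free (at most countably many torsion elements). Let hom^c(A₁, A₂) be the subgroup of Hom(A₁, A₂) consisting of homomorphisms with countable image, and hom⁰(A₁, A₂) = Hom(A₁, A₂)/hom^c(A₁, A₂). Then hom⁰(A₁, A₂) is torsion free. -/

import Mathlib

/-- `hom^c(A₁,A₂)`: the subgroup of `Hom(A₁,A₂)` of homomorphisms with countable image. -/
def homC (A₁ A₂ : Type*) [AddCommGroup A₁] [AddCommGroup A₂] : AddSubgroup (A₁ →+ A₂) where
  carrier := {τ : A₁ →+ A₂ | Set.Countable (Set.range τ)}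
  zero_mem' := Set.Countable.mono (by simp [Set.range_subset_iff])
    (Set.countable_singleton (0 : A₂))
  add_mem' := by
    intro f g hf hg
    refine Set.Countable.mono ?_ (Set.Countable.image2 hf hg (· + ·))
    rintro - ⟨x, rfl⟩
    exact Set.mem_image2_of_mem ⟨x, rfl⟩ ⟨x, rfl⟩
  neg_mem' := by
    intro f hf
    refine Set.Countable.mono ?_ (hf.image (fun y => -y))
    rintro - ⟨x, rfl⟩
    exact ⟨f x, ⟨x, rfl⟩, rfl⟩

/-- If `A₂` is essentially torsion free (at most countably many torsion elements), then
`hom⁰(A₁,A₂) = Hom(A₁,A₂)/hom^c(A₁,A₂)` is torsion free. -/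
theorem stmt11 {A₁ A₂ : Type*} [AddCommGroup A₁] [AddCommGroup A₂]
    (hA₂ : Set.Countable {a : A₂ | IsOfFinAddOrder a}) :
    ∀ x : (A₁ →+ A₂) ⧸ homC A₁ A₂, ∀ n : ℕ, 0 < n → n • x = 0 → x = 0 := by
  intro x n hn hx
  induction x using QuotientAddGroup.induction_on with
  | H f =>
    rw [show n • (f : (A₁ →+ A₂) ⧸ homC A₁ A₂) = ((n • f : A₁ →+ A₂) : (A₁ →+ A₂) ⧸ homC A₁ A₂)
        from ((QuotientAddGroup.mk' (homC A₁ A₂)).map_nsmul n f).symm,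
      QuotientAddGroup.eq_zero_iff] at hx
    rw [QuotientAddGroup.eq_zero_iff]
    -- hx : range (n • f) is countable; show range f is countable
    have hS : (Set.range ⇑(n • f)).Countable := hx
    choose g hg using fun s : Set.range ⇑(n • f) => s.2
    have hsub : Set.range ⇑f ⊆
        Set.image2 (· + ·) (Set.range fun s : Set.range ⇑(n • f) => f (g s))
          {a : A₂ | IsOfFinAddOrder a} := by
      rintro - ⟨x, rfl⟩
      set s : Set.range ⇑(n • f) := ⟨(n • f) x, Set.mem_range_self x⟩
      refine ⟨f (g s), Set.mem_range_self s, f x - f (g s), ?_, by simp⟩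
      have : n • (f x - f (g s)) = 0 := by
        have h1 : (n • f) (g s) = (n • f) x := hg s
        simp only [AddMonoidHom.nsmul_apply] at h1
        rw [smul_sub, h1, sub_self]
      exact isOfFinAddOrder_iff_nsmul_eq_zero.mpr ⟨n, hn, this⟩
    have : Countable (Set.range ⇑(n • f)) := hS.to_subtype
    exact Set.Countable.mono hsub (Set.Countable.image2 (Set.countable_range _) hA₂ _)
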